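/- Let A ∈ ℝ^{n×n}, C ∈ ℝ^{q×n}, F ∈ ℝ^{r×n} with rank(F) = r, let O be the observability matrix of (C, A), and let W(t₁) be the observability Gramian for some t₁ > 0 (which equals the controllability Gramian of the dual pair (Aᵀ, Cᵀ)). If rank([O; F]) = rank(O), then the r×r matrix F·W(t₁)·Fᵀ is invertible (weak duality in Gramian form: functional observability of (C, A; F) makes the dual target-control Gramian nonsingular). -/

import Mathlib

open Matrix intervalIntegral

/-- Observability matrix of the pair `(C, A)`: the vertical block stack of
`C, C*A, C*A², …, C*A^(n-1)`, indexed so that entry `((k, i), j)` is `(C * A^k) i j`. -/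
noncomputable def obsMat {n q : ℕ} (C : Matrix (Fin q) (Fin n) ℝ)
    (A : Matrix (Fin n) (Fin n) ℝ) : Matrix (Fin n × Fin q) (Fin n) ℝ :=
  fun ki j => (C * A ^ (ki.1 : ℕ)) ki.2 j

/-- Observability Gramian `W(t₁) = ∫₀^{t₁} exp(Aᵀτ) Cᵀ C exp(Aτ) dτ` (entrywise integral). -/
noncomputable def obsGram {n q : ℕ} (A : Matrix (Fin n) (Fin n) ℝ)
    (C : Matrix (Fin q) (Fin n) ℝ) (t₁ : ℝ) : Matrix (Fin n) (Fin n) ℝ :=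
  fun i j => ∫ τ in (0:ℝ)..t₁,
    (NormedSpace.exp (τ • Aᵀ) * Cᵀ * C * NormedSpace.exp (τ • A)) i j

namespace WeakDualityAux

open Set MeasureTheory Module

variable {n q r : ℕ}

/-- Continuity of the matrix exponential curve. -/
lemma cont_expCurve (A : Matrix (Fin n) (Fin n) ℝ) :
    Continuous fun τ : ℝ => NormedSpace.exp (τ • A) := by
  letI : SeminormedRing (Matrix (Fin n) (Fin n) ℝ) := Matrix.linftyOpSemiNormedRing
  letI : NormedRing (Matrix (Fin n) (Fin n) ℝ) := Matrix.linftyOpNormedRing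
  letI : NormedAlgebra ℝ (Matrix (Fin n) (Fin n) ℝ) := Matrix.linftyOpNormedAlgebra
  exact continuous_iff_continuousAt.2 fun τ => (hasDerivAt_exp_smul_const' A τ).continuousAt

/-- Derivative of an entry of `B * exp(τ•A) *ᵥ x`. -/
lemma hasDerivAt_entry (B : Matrix (Fin q) (Fin n) ℝ) (A : Matrix (Fin n) (Fin n) ℝ)
    (x : Fin n → ℝ) (i : Fin q) (τ : ℝ) :
    HasDerivAt (fun t : ℝ => ((B * NormedSpace.exp (t • A)) *ᵥ x) i)
      (((B * (A * NormedSpace.exp (τ • A))) *ᵥ x) i) τ := by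
  letI : SeminormedRing (Matrix (Fin n) (Fin n) ℝ) := Matrix.linftyOpSemiNormedRing
  letI : NormedRing (Matrix (Fin n) (Fin n) ℝ) := Matrix.linftyOpNormedRing
  letI : NormedAlgebra ℝ (Matrix (Fin n) (Fin n) ℝ) := Matrix.linftyOpNormedAlgebra
  have h1 : HasDerivAt (fun t : ℝ => NormedSpace.exp (t • A))
      (A * NormedSpace.exp (τ • A)) τ := hasDerivAt_exp_smul_const' A τ
  let L : Matrix (Fin n) (Fin n) ℝ →ₗ[ℝ] ℝ :=
    { toFun := fun M => ((B * M) *ᵥ x) i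
      map_add' := fun M N => by
        simp [Matrix.mul_add, Matrix.add_mulVec]
      map_smul' := fun c M => by
        simp [Matrix.mul_smul, Matrix.smul_mulVec] }
  have := (L.toContinuousLinearMap.hasFDerivAt
      (x := NormedSpace.exp (τ • A))).comp_hasDerivAt τ h1
  exact this

/-- If `C exp(τA) x` vanishes on `(0, t₁)` then `C A^k x = 0` for all `k`. -/
lemma obs_vanish {A : Matrix (Fin n) (Fin n) ℝ} {C : Matrix (Fin q) (Fin n) ℝ}
    {x : Fin n → ℝ} {t₁ : ℝ} (ht₁ : 0 < t₁)
    (h0 : ∀ τ ∈ Set.Ioo (0:ℝ) t₁, C *ᵥ (NormedSpace.exp (τ • A) *ᵥ x) = 0) :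
    ∀ k : ℕ, (C * A ^ k) *ᵥ x = 0 := by
  have main : ∀ k : ℕ, ∀ τ ∈ Set.Ioo (0:ℝ) t₁,
      ((C * A ^ k) * NormedSpace.exp (τ • A)) *ᵥ x = 0 := by
    intro k
    induction k with
    | zero =>
      intro τ hτ
      simpa [← Matrix.mulVec_mulVec] using h0 τ hτ
    | succ k ih =>
      intro τ hτ
      funext i
      have hev : (fun t : ℝ => (((C * A ^ k) * NormedSpace.exp (t • A)) *ᵥ x) i)
          =ᶠ[nhds τ] fun _ => 0 := by
        filter_upwards [isOpen_Ioo.mem_nhds hτ] with s hs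
        rw [ih s hs]
        rfl
      have hd0 : HasDerivAt
          (fun t : ℝ => (((C * A ^ k) * NormedSpace.exp (t • A)) *ᵥ x) i) 0 τ :=
        (hasDerivAt_const τ (0:ℝ)).congr_of_eventuallyEq hev
      have hd := hasDerivAt_entry (C * A ^ k) A x i τ
      have hu := hd.unique hd0
      have hre : (C * A ^ (k + 1)) * NormedSpace.exp (τ • A)
          = (C * A ^ k) * (A * NormedSpace.exp (τ • A)) := by
        rw [pow_succ, ← Matrix.mul_assoc C (A ^ k) A,
          Matrix.mul_assoc (C * A ^ k) A (NormedSpace.exp (τ • A))]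
      show (((C * A ^ (k + 1)) * NormedSpace.exp (τ • A)) *ᵥ x) i = 0
      rw [hre]
      exact hu
  intro k
  have hcont : Continuous fun τ : ℝ => ((C * A ^ k) * NormedSpace.exp (τ • A)) *ᵥ x :=
    (continuous_const.matrix_mul (cont_expCurve A)).matrix_mulVec continuous_const
  have heq : Set.EqOn (fun τ : ℝ => ((C * A ^ k) * NormedSpace.exp (τ • A)) *ᵥ x)
      (fun _ => 0) (Set.Ioo 0 t₁) := fun τ hτ => main k τ hτ
  have hcl := heq.closure hcont continuous_const
  have h00 : (0:ℝ) ∈ closure (Set.Ioo (0:ℝ) t₁) := by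
    rw [closure_Ioo ht₁.ne]
    exact Set.left_mem_Icc.2 ht₁.le
  have := hcl h00
  simpa [NormedSpace.exp_zero] using this

/-- Quadratic form of the observability Gramian. -/
lemma dot_expand {m k : ℕ} (M : Matrix (Fin m) (Fin k) ℝ) (x : Fin k → ℝ) (y : Fin m → ℝ) :
    y ⬝ᵥ (M *ᵥ x) = ∑ i, ∑ j, y i * (M i j * x j) := by
  simp [dotProduct, Matrix.mulVec, Finset.mul_sum]

lemma quadform (A : Matrix (Fin n) (Fin n) ℝ) (C : Matrix (Fin q) (Fin n) ℝ)
    (t₁ : ℝ) (x : Fin n → ℝ) :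
    x ⬝ᵥ (obsGram A C t₁ *ᵥ x) =
      ∫ τ in (0:ℝ)..t₁, (C *ᵥ (NormedSpace.exp (τ • A) *ᵥ x)) ⬝ᵥ
        (C *ᵥ (NormedSpace.exp (τ • A) *ᵥ x)) := by
  have hwc : ∀ i j, Continuous fun τ : ℝ =>
      (NormedSpace.exp (τ • Aᵀ) * Cᵀ * C * NormedSpace.exp (τ • A)) i j := fun i j =>
    ((((cont_expCurve Aᵀ).matrix_mul continuous_const).matrix_mul
      continuous_const).matrix_mul (cont_expCurve A)).matrix_elem i j
  have hc : ∀ i j, Continuous fun τ : ℝ =>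
      x i * ((NormedSpace.exp (τ • Aᵀ) * Cᵀ * C * NormedSpace.exp (τ • A)) i j * x j) :=
    fun i j => continuous_const.mul ((hwc i j).mul continuous_const)
  have hterm : ∀ i j, IntervalIntegrable (fun τ : ℝ =>
      x i * ((NormedSpace.exp (τ • Aᵀ) * Cᵀ * C * NormedSpace.exp (τ • A)) i j * x j))
      MeasureTheory.volume 0 t₁ :=
    fun i j => (hc i j).intervalIntegrable 0 t₁
  have key : ∀ τ : ℝ, x ⬝ᵥ ((NormedSpace.exp (τ • Aᵀ) * Cᵀ * C * NormedSpace.exp (τ • A)) *ᵥ x) =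
      (C *ᵥ (NormedSpace.exp (τ • A) *ᵥ x)) ⬝ᵥ (C *ᵥ (NormedSpace.exp (τ • A) *ᵥ x)) := by
    intro τ
    have h1 : NormedSpace.exp (τ • Aᵀ) = (NormedSpace.exp (τ • A))ᵀ := by
      rw [← Matrix.transpose_smul, Matrix.exp_transpose]
    have h2 : NormedSpace.exp (τ • Aᵀ) * Cᵀ * C * NormedSpace.exp (τ • A)
        = (C * NormedSpace.exp (τ • A))ᵀ * (C * NormedSpace.exp (τ • A)) := by
      rw [h1, Matrix.transpose_mul, Matrix.mul_assoc]
    rw [h2, ← Matrix.mulVec_mulVec, Matrix.dotProduct_mulVec, Matrix.vecMul_transpose,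
      Matrix.mulVec_mulVec]
  calc x ⬝ᵥ (obsGram A C t₁ *ᵥ x)
      = ∑ i, ∑ j, x i * (obsGram A C t₁ i j * x j) := dot_expand _ _ _
    _ = ∑ i, ∑ j, ∫ τ in (0:ℝ)..t₁,
        x i * ((NormedSpace.exp (τ • Aᵀ) * Cᵀ * C * NormedSpace.exp (τ • A)) i j * x j) := by
        refine Finset.sum_congr rfl fun i _ => Finset.sum_congr rfl fun j _ => ?_
        have hg : obsGram A C t₁ i j = ∫ τ in (0:ℝ)..t₁,
            (NormedSpace.exp (τ • Aᵀ) * Cᵀ * C * NormedSpace.exp (τ • A)) i j := by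
          simp only [obsGram]
        rw [hg, ← intervalIntegral.integral_mul_const, ← intervalIntegral.integral_const_mul]
    _ = ∫ τ in (0:ℝ)..t₁, ∑ i, ∑ j,
        x i * ((NormedSpace.exp (τ • Aᵀ) * Cᵀ * C * NormedSpace.exp (τ • A)) i j * x j) := by
        rw [intervalIntegral.integral_finset_sum]
        · refine Finset.sum_congr rfl fun i _ => ?_
          rw [intervalIntegral.integral_finset_sum]
          intro j _
          exact hterm i j
        · intro i _
          exact (continuous_finset_sum Finset.univ fun j _ => hc i j).intervalIntegrable 0 t₁
    _ = ∫ τ in (0:ℝ)..t₁,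
        x ⬝ᵥ ((NormedSpace.exp (τ • Aᵀ) * Cᵀ * C * NormedSpace.exp (τ • A)) *ᵥ x) :=
        intervalIntegral.integral_congr fun τ _ => (dot_expand _ _ _).symm
    _ = ∫ τ in (0:ℝ)..t₁, (C *ᵥ (NormedSpace.exp (τ • A) *ᵥ x)) ⬝ᵥ
        (C *ᵥ (NormedSpace.exp (τ • A) *ᵥ x)) :=
        intervalIntegral.integral_congr fun τ _ => key τ

/-- A nonnegative continuous function with zero integral vanishes on the open interval. -/
lemma integrand_zero {g : ℝ → ℝ} {t₁ : ℝ} (hg : Continuous g) (hnn : ∀ τ, 0 ≤ g τ)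
    (ht₁ : 0 < t₁) (hint : ∫ τ in (0:ℝ)..t₁, g τ = 0) :
    ∀ τ ∈ Set.Ioo (0:ℝ) t₁, g τ = 0 := by
  have hii : IntervalIntegrable g volume 0 t₁ := hg.intervalIntegrable 0 t₁
  have hae : g =ᵐ[volume.restrict (Set.Ioc (0:ℝ) t₁)] 0 :=
    (intervalIntegral.integral_eq_zero_iff_of_le_of_nonneg_ae ht₁.le
      (Filter.Eventually.of_forall hnn) hii).mp hint
  have hae' : ∀ᵐ τ ∂(volume.restrict (Set.Ioc (0:ℝ) t₁)), g τ = 0 :=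
    hae.mono fun τ h => by simpa using h
  have hnull : volume.restrict (Set.Ioc (0:ℝ) t₁) {τ | g τ ≠ 0} = 0 :=
    MeasureTheory.ae_iff.mp hae'
  intro τ hτ
  by_contra hne
  have hpos : 0 < g τ := (hnn τ).lt_of_ne (Ne.symm hne)
  set U := Set.Ioo (0:ℝ) t₁ ∩ g ⁻¹' Set.Ioi 0 with hU
  have hUopen : IsOpen U := isOpen_Ioo.inter (isOpen_Ioi.preimage hg)
  have hτU : τ ∈ U := ⟨hτ, hpos⟩
  have hUsub : U ⊆ {τ | g τ ≠ 0} := fun u hu => ne_of_gt hu.2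
  have hU0 : volume.restrict (Set.Ioc (0:ℝ) t₁) U = 0 :=
    measure_mono_null hUsub hnull
  rw [Measure.restrict_apply hUopen.measurableSet,
    Set.inter_eq_self_of_subset_left
      (subset_trans Set.inter_subset_left Set.Ioo_subset_Ioc_self)] at hU0
  exact (hUopen.measure_pos volume ⟨τ, hτU⟩).ne' hU0

/-- The kernel inclusion coming from the rank condition. -/
lemma fromRows_rank_eq_imp {α β : Type*} [Fintype α] [Fintype β]
    (O : Matrix α (Fin n) ℝ) (F : Matrix β (Fin n) ℝ)
    (h : (Matrix.fromRows O F).rank = O.rank) :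
    ∀ x : Fin n → ℝ, O *ᵥ x = 0 → F *ᵥ x = 0 := by
  have hle : LinearMap.ker (Matrix.fromRows O F).mulVecLin ≤ LinearMap.ker O.mulVecLin := by
    intro y hy
    rw [LinearMap.mem_ker, Matrix.mulVecLin_apply, Matrix.fromRows_mulVec] at hy
    rw [LinearMap.mem_ker, Matrix.mulVecLin_apply]
    exact funext fun i => congrFun hy (Sum.inl i)
  have h1 := LinearMap.finrank_range_add_finrank_ker (Matrix.fromRows O F).mulVecLin
  have h2 := LinearMap.finrank_range_add_finrank_ker O.mulVecLin
  have hk : finrank ℝ (LinearMap.ker (Matrix.fromRows O F).mulVecLin)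
      = finrank ℝ (LinearMap.ker O.mulVecLin) := by
    unfold Matrix.rank at h
    omega
  have hkereq := Submodule.eq_of_le_of_finrank_eq hle hk
  intro x hx
  have hxker : x ∈ LinearMap.ker (Matrix.fromRows O F).mulVecLin := by
    rw [hkereq, LinearMap.mem_ker, Matrix.mulVecLin_apply]
    exact hx
  rw [LinearMap.mem_ker, Matrix.mulVecLin_apply, Matrix.fromRows_mulVec] at hxker
  exact funext fun i => congrFun hxker (Sum.inr i)

/-- Full row rank implies `Fᵀ*ᵥ` is injective. -/
lemma transpose_mulVec_inj (F : Matrix (Fin r) (Fin n) ℝ) (hF : F.rank = r)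
    {v : Fin r → ℝ} (h : Fᵀ *ᵥ v = 0) : v = 0 := by
  have hrt : Fᵀ.rank = r := by rw [Matrix.rank_transpose]; exact hF
  have h1 := LinearMap.finrank_range_add_finrank_ker Fᵀ.mulVecLin
  rw [Module.finrank_fintype_fun_eq_card, Fintype.card_fin] at h1
  have hker : finrank ℝ (LinearMap.ker Fᵀ.mulVecLin) = 0 := by
    unfold Matrix.rank at hrt
    omega
  have hbot : LinearMap.ker Fᵀ.mulVecLin = ⊥ := Submodule.finrank_eq_zero.mp hker
  have : v ∈ LinearMap.ker Fᵀ.mulVecLin := by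
    rw [LinearMap.mem_ker, Matrix.mulVecLin_apply]
    exact h
  rw [hbot, Submodule.mem_bot] at this
  exact this

end WeakDualityAux

open WeakDualityAux MeasureTheory Module

/-- **Weak duality in Gramian form.** If `rank(F) = r` and `(C, A; F)` is functionally
observable (`rank([O; F]) = rank(O)`), then for any `t₁ > 0` the `r × r` matrix
`F · W(t₁) · Fᵀ` is invertible, where `W(t₁)` is the observability Gramian. -/
theorem weak_duality_gramian {n q r : ℕ}
    (A : Matrix (Fin n) (Fin n) ℝ) (C : Matrix (Fin q) (Fin n) ℝ)
    (F : Matrix (Fin r) (Fin n) ℝ) (t₁ : ℝ) (ht₁ : 0 < t₁)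
    (hF : F.rank = r)
    (hfo : (Matrix.fromRows (obsMat C A) F).rank = (obsMat C A).rank) :
    IsUnit (F * obsGram A C t₁ * Fᵀ) := by
  rw [← Matrix.mulVec_injective_iff_isUnit]
  have hker : ∀ v : Fin r → ℝ, (F * obsGram A C t₁ * Fᵀ) *ᵥ v = 0 → v = 0 := by
    intro v hv
    set x : Fin n → ℝ := Fᵀ *ᵥ v with hx
    have hq0 : x ⬝ᵥ (obsGram A C t₁ *ᵥ x) = 0 := by
      have h2 : v ⬝ᵥ ((F * obsGram A C t₁ * Fᵀ) *ᵥ v) = x ⬝ᵥ (obsGram A C t₁ *ᵥ x) := by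
        rw [Matrix.mul_assoc, ← Matrix.mulVec_mulVec, ← Matrix.mulVec_mulVec,
          Matrix.dotProduct_mulVec, ← Matrix.mulVec_transpose]
      rw [← h2, hv, dotProduct_zero]
    have hcontg : Continuous fun τ : ℝ =>
        (C *ᵥ (NormedSpace.exp (τ • A) *ᵥ x)) ⬝ᵥ (C *ᵥ (NormedSpace.exp (τ • A) *ᵥ x)) := by
      have hg : Continuous fun τ : ℝ => C *ᵥ (NormedSpace.exp (τ • A) *ᵥ x) :=
        continuous_const.matrix_mulVec ((cont_expCurve A).matrix_mulVec continuous_const)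
      exact hg.dotProduct hg
    have hnn : ∀ τ : ℝ, 0 ≤ (C *ᵥ (NormedSpace.exp (τ • A) *ᵥ x)) ⬝ᵥ
        (C *ᵥ (NormedSpace.exp (τ • A) *ᵥ x)) := fun τ =>
      Finset.sum_nonneg fun i _ => mul_self_nonneg _
    have hint0 : ∫ τ in (0:ℝ)..t₁, (C *ᵥ (NormedSpace.exp (τ • A) *ᵥ x)) ⬝ᵥ
        (C *ᵥ (NormedSpace.exp (τ • A) *ᵥ x)) = 0 := by
      rw [← quadform]
      exact hq0
    have hgz : ∀ τ ∈ Set.Ioo (0:ℝ) t₁, C *ᵥ (NormedSpace.exp (τ • A) *ᵥ x) = 0 := by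
      intro τ hτ
      exact dotProduct_self_eq_zero.mp (integrand_zero hcontg hnn ht₁ hint0 τ hτ)
    have hk := obs_vanish ht₁ hgz
    have hO : obsMat C A *ᵥ x = 0 := by
      funext ki
      have := congrFun (hk ki.1) ki.2
      simpa [obsMat, Matrix.mulVec, dotProduct] using this
    have hFx : F *ᵥ x = 0 := fromRows_rank_eq_imp (obsMat C A) F hfo x hO
    have hxx : x = 0 := by
      have hdd : x ⬝ᵥ x = 0 := by
        nth_rewrite 1 [hx]
        rw [Matrix.mulVec_transpose, ← Matrix.dotProduct_mulVec, hFx, dotProduct_zero]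
      exact dotProduct_self_eq_zero.mp hdd
    exact transpose_mulVec_inj F hF (hx ▸ hxx)
  intro v w hvw
  have h := hker (v - w) (by rw [Matrix.mulVec_sub, hvw, sub_self])
  exact sub_eq_zero.mp h
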